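/- Let f : ℝ^d → ℝ^d be a polynomial map with rational coefficients and p ∈ ℝ^d a point with coordinates algebraically independent over ℚ. Suppose the Jacobian df|_p is nonsingular. Then for every q ∈ ℝ^d with f(q) = f(p), the algebraic closure (inside ℝ) of the field ℚ(p) generated by the coordinates of p equals the algebraic closure of ℚ(q). -/

import Mathlib

open MvPolynomial

section Auxiliary

theorem pderiv_bind₁ {d : ℕ} (P : Fin d → MvPolynomial (Fin d) ℚ) (j : Fin d) (F : MvPolynomial (Fin d) ℚ) :
    pderiv j (bind₁ P F) = ∑ i, bind₁ P (pderiv i F) * pderiv j (P i) := by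
  induction F using MvPolynomial.induction_on with
  | C a => simp
  | add f g hf hg => simp [hf, hg, add_mul, Finset.sum_add_distrib]
  | mul_X f k hf =>
      simp only [map_mul, bind₁_X_right, pderiv_mul, hf, map_add, add_mul, Finset.sum_add_distrib]
      congr 1
      · rw [Finset.sum_mul]; exact Finset.sum_congr rfl fun i _ => by ring
      · rw [Finset.sum_eq_single k]
        · simp
        · intro i _ hik
          rw [pderiv_X_of_ne (Ne.symm hik)]; simp
        · simp

theorem pderiv_as_sum {d : ℕ} (i : Fin d) (F : MvPolynomial (Fin d) ℚ) :
    pderiv i F = ∑ s ∈ F.support, monomial (s - Finsupp.single i 1) (coeff s F * s i) := by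
  conv_lhs => rw [F.as_sum, map_sum]
  exact Finset.sum_congr rfl fun s _ => pderiv_monomial

theorem totalDegree_pderiv_lt {d : ℕ} {F : MvPolynomial (Fin d) ℚ} (h : F.totalDegree ≠ 0)
    (i : Fin d) : (pderiv i F).totalDegree < F.totalDegree := by
  rw [pderiv_as_sum]
  refine lt_of_le_of_lt (totalDegree_finset_sum _ _) ?_
  rw [Finset.sup_lt_iff (by exact Nat.pos_of_ne_zero h)]
  intro s hs
  by_cases h0 : s i = 0
  · simp only [h0, Nat.cast_zero, mul_zero, map_zero, totalDegree_zero]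
    exact Nat.pos_of_ne_zero h
  · refine lt_of_le_of_lt (totalDegree_monomial_le _ _) (lt_of_lt_of_le ?_ (le_totalDegree hs))
    rw [Finsupp.sum_fintype _ _ (fun _ => rfl), Finsupp.sum_fintype _ _ (fun _ => rfl)]
    refine Finset.sum_lt_sum (fun x _ => ?_) ⟨i, Finset.mem_univ i, ?_⟩
    · rw [Finsupp.tsub_apply]; exact Nat.sub_le _ _
    · rw [Finsupp.tsub_apply, Finsupp.single_eq_same]
      exact Nat.sub_lt (Nat.pos_of_ne_zero h0) one_pos

theorem totalDegree_eq_zero_of_pderiv {d : ℕ} {F : MvPolynomial (Fin d) ℚ}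
    (h : ∀ i, pderiv i F = 0) : F.totalDegree = 0 := by
  by_contra h0
  have hne : F.support.Nonempty := by
    rw [Finset.nonempty_iff_ne_empty]
    intro he
    exact h0 (by simp [totalDegree, he])
  obtain ⟨s, hs, hsum⟩ := Finset.exists_mem_eq_sup _ hne (fun s : Fin d →₀ ℕ => s.sum fun _ e => e)
  have hssum : (s.sum fun _ e => e) ≠ 0 := by rw [← hsum]; exact h0
  have : ∃ i, s i ≠ 0 := by
    by_contra hc
    push_neg at hc
    have hz : s = 0 := Finsupp.ext fun x => hc x
    rw [hz] at hssum
    exact hssum (Finsupp.sum_zero_index)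
  obtain ⟨i, hi⟩ := this
  have hco : coeff (s - Finsupp.single i 1) (pderiv i F) = coeff s F * s i := by
    rw [pderiv_as_sum]
    rw [coeff_sum]
    rw [Finset.sum_eq_single s]
    · rw [coeff_monomial, if_pos rfl]
    · intro s' hs' hne'
      rw [coeff_monomial]
      by_cases h0' : s' i = 0
      · simp [h0']
      · rw [if_neg]
        intro heq
        apply hne'
        have h1 : Finsupp.single i 1 ≤ s' := by
          rw [Finsupp.single_le_iff]; omega
        have h2 : Finsupp.single i 1 ≤ s := by
          rw [Finsupp.single_le_iff]; omega
        calc s' = s' - Finsupp.single i 1 + Finsupp.single i 1 := (tsub_add_cancel_of_le h1).symm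
        _ = s - Finsupp.single i 1 + Finsupp.single i 1 := by rw [heq]
        _ = s := tsub_add_cancel_of_le h2
    · intro hns; exact absurd hs hns
  have : coeff s F * s i ≠ 0 := by
    refine mul_ne_zero (mem_support_iff.1 hs) ?_
    exact_mod_cast fun hh => hi (by exact_mod_cast hh)
  rw [← hco, h i] at this
  simp at this

theorem not_algIndep_option {n : ℕ} (Q : Option (Fin n) → MvPolynomial (Fin n) ℚ) :
    ¬ AlgebraicIndependent ℚ Q := by
  classical
  intro h
  have hinj : Function.Injective (aeval (R := ℚ) Q) :=
    algebraicIndependent_iff_injective_aeval.mp h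
  set D : ℕ := Finset.univ.sup fun o => (Q o).totalDegree with hD
  set c : ℕ := (n + 1) * D + 1 with hc
  set E : ℕ := c ^ n with hE
  set M : ℕ := (n + 1) * E * D with hM
  -- index type for exponents
  set emb : (Option (Fin n) → Fin (E + 1)) → (Option (Fin n) →₀ ℕ) :=
    fun f => Finsupp.equivFunOnFinite.symm (fun o => (f o : ℕ)) with hemb
  have emb_inj : Function.Injective emb := by
    intro a b hab
    funext o
    have := congrArg (fun s => s o) hab
    simpa [hemb, Fin.ext_iff] using this
  set fam : (Option (Fin n) → Fin (E + 1)) → MvPolynomial (Fin n) ℚ := fun f => aeval (R := ℚ) Q (monomial (emb f) (1 : ℚ)) with hfam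
  -- linear independence
  have hli : LinearIndependent ℚ fam := by
    have h1 : LinearIndependent ℚ (fun s : Option (Fin n) →₀ ℕ =>
        (monomial s (1 : ℚ) : MvPolynomial (Option (Fin n)) ℚ)) := by
      have := (basisMonomials (Option (Fin n)) ℚ).linearIndependent
      rwa [coe_basisMonomials] at this
    have h2 := (h1.comp emb emb_inj).map' (aeval (R := ℚ) Q).toLinearMap
      (LinearMap.ker_eq_bot.mpr hinj)
    simpa only [hfam, Function.comp_def, AlgHom.toLinearMap_apply] using h2
  -- the spanning finite set
  set w : Set (MvPolynomial (Fin n) ℚ) :=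
    Set.range (fun g : Fin n → Fin (M + 1) =>
      (monomial (Finsupp.equivFunOnFinite.symm fun i => (g i : ℕ)) (1 : ℚ))) with hw
  -- any poly with totalDegree ≤ M is in span of w
  have hspan : ∀ F : MvPolynomial (Fin n) ℚ, F.totalDegree ≤ M → F ∈ Submodule.span ℚ w := by
    intro F hF
    rw [F.as_sum]
    refine Submodule.sum_mem _ fun s hs => ?_
    have hs' : ∀ i, s i ≤ M := by
      intro i
      refine le_trans ?_ (le_trans (le_totalDegree hs) hF)
      rw [Finsupp.sum_fintype _ _ (fun _ => rfl)]
      exact Finset.single_le_sum (f := fun x => s x) (fun _ _ => Nat.zero_le _) (Finset.mem_univ i)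
    have hmem : (monomial s (1 : ℚ) : MvPolynomial (Fin n) ℚ) ∈ w := by
      refine ⟨fun i => ⟨s i, Nat.lt_succ_of_le (hs' i)⟩, ?_⟩
      congr 1
      ext i
      simp
    have : monomial s (coeff s F) = (coeff s F) • (monomial s (1 : ℚ)) := by
      rw [smul_monomial, smul_eq_mul, mul_one]
    rw [this]
    exact Submodule.smul_mem _ _ (Submodule.subset_span hmem)
  -- each fam f has totalDegree ≤ M
  have hdeg : ∀ f : Option (Fin n) → Fin (E + 1), (fam f).totalDegree ≤ M := by
    intro f
    have : fam f = (emb f).prod fun o e => Q o ^ e := by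
      simp only [hfam, aeval_monomial, map_one, one_mul]
    rw [this, Finsupp.prod]
    refine le_trans (totalDegree_finset_prod _ _) ?_
    have hterm : ∀ o ∈ (emb f).support, (Q o ^ emb f o).totalDegree ≤ E * D := by
      intro o _
      refine le_trans (totalDegree_pow _ _) (Nat.mul_le_mul ?_ ?_)
      · have he : emb f o = (f o : ℕ) := by simp [hemb]
        rw [he]; exact Nat.lt_succ_iff.mp (f o).2
      · show (Q o).totalDegree ≤ Finset.univ.sup fun o => (Q o).totalDegree
        exact Finset.le_sup (f := fun o => (Q o).totalDegree) (Finset.mem_univ o)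
    calc ∑ o ∈ (emb f).support, (Q o ^ emb f o).totalDegree
        ≤ ∑ _o ∈ (emb f).support, E * D := Finset.sum_le_sum hterm
      _ ≤ ∑ _o : Option (Fin n), E * D := Finset.sum_le_sum_of_subset (Finset.subset_univ _)
      _ = (n + 1) * (E * D) := by
          rw [Finset.sum_const, Finset.card_univ, Fintype.card_option, Fintype.card_fin,
            smul_eq_mul]
      _ = M := by rw [hM]; ring
  -- cardinality bound
  have hw_fin : Fintype w := by
    rw [hw]; exact Set.fintypeRange _
  have hcard := linearIndependent_le_span' fam hli w
    (fun x hx => by obtain ⟨f, rfl⟩ := hx; exact hspan (fam f) (hdeg f))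
  rw [Cardinal.mk_fintype, Nat.cast_le] at hcard
  have h1 : Fintype.card (Option (Fin n) → Fin (E + 1)) = (E + 1) ^ (n + 1) := by
    rw [Fintype.card_fun, Fintype.card_fin, Fintype.card_option, Fintype.card_fin]
  have h2 : Fintype.card w ≤ (M + 1) ^ n := by
    refine le_trans (Fintype.card_range_le _) ?_
    rw [Fintype.card_fun, Fintype.card_fin, Fintype.card_fin]
  have hfinal : (E + 1) ^ (n + 1) ≤ (M + 1) ^ n := h1 ▸ le_trans hcard h2
  -- numeric contradiction
  have hnum : (M + 1) ^ n < (E + 1) ^ (n + 1) := by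
    have hMc : M + 1 ≤ c * (E + 1) := by
      rw [hM, hc]; nlinarith [Nat.zero_le D, Nat.zero_le E, Nat.zero_le n]
    calc (M + 1) ^ n ≤ (c * (E + 1)) ^ n := Nat.pow_le_pow_left hMc n
      _ = E * (E + 1) ^ n := by rw [mul_pow, hE]
      _ < (E + 1) * (E + 1) ^ n :=
          (Nat.mul_lt_mul_right (Nat.pow_pos (n := n) (Nat.succ_pos E))).mpr (Nat.lt_succ_self E)
      _ = (E + 1) ^ (n + 1) := by ring
  omega

theorem bind₁_inj {d : ℕ} (P : Fin d → MvPolynomial (Fin d) ℚ)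
    (hdet : (Matrix.of fun (i : Fin d) (j : Fin d) => pderiv j (P i)).det ≠ 0) :
    Function.Injective (bind₁ (R := ℚ) P) := by
  rw [injective_iff_map_eq_zero]
  suffices H : ∀ n, ∀ F : MvPolynomial (Fin d) ℚ, F.totalDegree ≤ n → bind₁ P F = 0 → F = 0 by
    exact fun F hF => H F.totalDegree F le_rfl hF
  intro n
  induction n with
  | zero =>
    intro F hdeg hF
    have h0 : F.totalDegree = 0 := Nat.le_zero.1 hdeg
    have hsup : ∀ m ∈ F.support, m = 0 := fun m hm =>
      Finsupp.ext fun x => (totalDegree_eq_zero_iff _ F).1 h0 m hm x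
    have hC : F = C (coeff 0 F) := by
      ext m
      by_cases hm : m = 0
      · subst hm; simp [coeff_C]
      · have : m ∉ F.support := fun hin => hm (hsup m hin)
        rw [notMem_support_iff.1 this, coeff_C, if_neg (fun h => hm h.symm)]
    rw [hC] at hF ⊢
    rw [bind₁_C_right] at hF
    rw [(C_injective _ _).eq_iff.1 (hF.trans C_0.symm)]
    exact C_0
  | succ n ih =>
    intro F hdeg hF
    by_cases h0 : F.totalDegree = 0
    · exact ih F (h0 ▸ Nat.zero_le n) hF
    -- vecMul argument
    have hrow : ∀ j, ∑ i, bind₁ P (pderiv i F) * pderiv j (P i) = 0 := by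
      intro j
      rw [← pderiv_bind₁, hF, map_zero]
    have hvm : Matrix.vecMul (fun i => bind₁ P (pderiv i F)) (Matrix.of fun (i : Fin d) (j : Fin d) => pderiv j (P i)) = 0 := by
      funext j
      simpa [Matrix.vecMul, dotProduct] using hrow j
    have hz := Matrix.eq_zero_of_vecMul_eq_zero hdet hvm
    have hpz : ∀ i, pderiv i F = 0 := by
      intro i
      have hlt := totalDegree_pderiv_lt h0 i
      exact ih (pderiv i F) (by omega) (congrFun hz i)
    exact absurd (totalDegree_eq_zero_of_pderiv hpz) h0

-- core: r i is algebraic over the subalgebra generated by v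
theorem core {d : ℕ} (P : Fin d → MvPolynomial (Fin d) ℚ)
    (v r : Fin d → ℝ) (hv : AlgebraicIndependent ℚ v)
    (hr : ∀ j, aeval r (P j) = v j) (i : Fin d) :
    IsAlgebraic (Algebra.adjoin ℚ (Set.range v)) (r i) := by
  by_contra htr
  have hopt : AlgebraicIndependent ℚ (fun o : Option (Fin d) => o.elim (r i) v) :=
    (hv.option_iff_transcendental (r i)).mpr htr
  set Q : Option (Fin d) → MvPolynomial (Fin d) ℚ := fun o => o.elim (X i) P with hQdef
  have hfam : (fun o : Option (Fin d) => o.elim (r i) v) = fun o => aeval r (Q o) := by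
    funext o
    cases o with
    | none => simp [hQdef]
    | some j => simp [hQdef, hr j]
  rw [hfam] at hopt
  have hQ : AlgebraicIndependent ℚ Q := by
    rw [algebraicIndependent_iff_injective_aeval] at hopt ⊢
    intro a b hab
    apply hopt
    have hcomp : ((aeval (R := ℚ) r).comp (aeval (R := ℚ) Q)) = aeval fun o => aeval r (Q o) :=
      comp_aeval Q (aeval r)
    calc (aeval fun o => aeval r (Q o)) a = aeval r (aeval Q a) := by rw [← hcomp]; rfl
      _ = aeval r (aeval Q b) := by rw [hab]
      _ = (aeval fun o => aeval r (Q o)) b := by rw [← hcomp]; rfl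
  exact not_algIndep_option Q hQ

end Auxiliary

/-- If `f : ℝ^d → ℝ^d` is a polynomial map with rational coefficients,
`p` is generic, and the Jacobian of `f` at `p` is nonsingular, then for every `q` with
`f(q) = f(p)` the relative algebraic closure of `ℚ(p)` in `ℝ` equals that of `ℚ(q)`. -/
theorem algebraic_closure_eq_of_same_image
    {d : ℕ} (P : Fin d → MvPolynomial (Fin d) ℚ)
    (p : Fin d → ℝ) (hp : AlgebraicIndependent ℚ p)
    (hJ : (Matrix.of fun (i : Fin d) (j : Fin d) =>
        MvPolynomial.aeval p (MvPolynomial.pderiv j (P i))).det ≠ 0)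
    (q : Fin d → ℝ)
    (hq : ∀ i, MvPolynomial.aeval q (P i) = MvPolynomial.aeval p (P i)) :
    {x : ℝ | IsAlgebraic (IntermediateField.adjoin ℚ (Set.range p)) x} =
    {x : ℝ | IsAlgebraic (IntermediateField.adjoin ℚ (Set.range q)) x} := by
  classical
  have hpinj : Function.Injective (aeval (R := ℚ) p) :=
    algebraicIndependent_iff_injective_aeval.mp hp
  have hdet : (Matrix.of fun (i : Fin d) (j : Fin d) => pderiv j (P i)).det ≠ 0 := by
    intro h0
    apply hJ
    have hmd : (Matrix.of fun (i : Fin d) (j : Fin d) =>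
        MvPolynomial.aeval p (MvPolynomial.pderiv j (P i))).det
        = aeval (R := ℚ) p ((Matrix.of fun (i : Fin d) (j : Fin d) => pderiv j (P i)).det) := by
      rw [AlgHom.map_det]
      rfl
    rw [hmd, h0, map_zero]
  have hbind : Function.Injective (bind₁ (R := ℚ) P) := bind₁_inj P hdet
  set v : Fin d → ℝ := fun j => aeval p (P j) with hv_def
  have hv : AlgebraicIndependent ℚ v := by
    rw [algebraicIndependent_iff_injective_aeval]
    have h1 : ∀ F, aeval (R := ℚ) v F = aeval p (bind₁ P F) := fun F => (aeval_bind₁ p P F).symm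
    intro a b hab
    apply hbind; apply hpinj
    rw [← h1, ← h1]; exact hab
  have hqp : ∀ j, aeval q (P j) = v j := fun j => hq j
  have hpp : ∀ j, aeval p (P j) = v j := fun j => rfl
  set K : IntermediateField ℚ ℝ := IntermediateField.adjoin ℚ (Set.range v) with hK_def
  have halg : ∀ (r : Fin d → ℝ), (∀ j, aeval r (P j) = v j) → ∀ i, IsAlgebraic K (r i) := by
    intro r hr i
    have h1 := core P v r hv hr i
    have hle : Algebra.adjoin ℚ (Set.range v) ≤ K.toSubalgebra :=
      IntermediateField.algebra_adjoin_le_adjoin ℚ _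
    exact h1.tower_top_of_subalgebra_le hle
  have key : ∀ (r : Fin d → ℝ), (∀ j, aeval r (P j) = v j) →
      {x : ℝ | IsAlgebraic (IntermediateField.adjoin ℚ (Set.range r)) x}
        = {x : ℝ | IsAlgebraic K x} := by
    intro r hr
    have hKr : K ≤ IntermediateField.adjoin ℚ (Set.range r) := by
      rw [hK_def, IntermediateField.adjoin_le_iff]
      rintro _ ⟨j, rfl⟩
      rw [← hr j]
      have hmem : aeval r (P j) ∈ Algebra.adjoin ℚ (Set.range r) := by
        rw [Algebra.adjoin_range_eq_range_aeval]
        exact ⟨P j, rfl⟩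
      exact IntermediateField.algebra_adjoin_le_adjoin ℚ _ hmem
    ext x
    simp only [Set.mem_setOf_eq]
    constructor
    · intro hx
      set M : IntermediateField K ℝ := IntermediateField.adjoin K (Set.range r) with hM_def
      have hM : Algebra.IsAlgebraic K M := by
        refine IntermediateField.isAlgebraic_adjoin (fun y hy => ?_)
        obtain ⟨i, rfl⟩ := hy
        exact (halg r hr i).isIntegral
      have hxM : IsAlgebraic M x := by
        have hle : (IntermediateField.adjoin ℚ (Set.range r)).toSubalgebra ≤
            (IntermediateField.restrictScalars ℚ M).toSubalgebra := by
          apply IntermediateField.adjoin_le_iff.mpr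
          intro y hy
          exact IntermediateField.subset_adjoin K (Set.range r) hy
        exact hx.tower_top_of_subalgebra_le hle
      haveI : Algebra.IsIntegral K M := Algebra.isAlgebraic_iff_isIntegral.mp hM
      exact (isIntegral_trans x hxM.isIntegral).isAlgebraic
    · intro hx
      exact hx.tower_top_of_subalgebra_le
        (show K.toSubalgebra ≤ (IntermediateField.adjoin ℚ (Set.range r)).toSubalgebra
          from fun y hy => hKr hy)
  rw [key p hpp, key q hqp]
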